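/- Let μ = c·δ_t with c ∈ ℂ, c ≠ 0, t ∈ [0,Λ], and let v₁, v₂ ∈ [-Ω,Ω] be distinct with Ω·Λ < 1/2. Then the four quantities |μ̂(v₁)|², |μ̂(v₂)|², |μ̂(v₁) - μ̂(v₂)|², |μ̂(v₁) - i·μ̂(v₂)|² determine μ up to a unimodular constant: if ν = c'·δ_{t'} with t' ∈ [0,Λ] produces the same four quantities, then t = t' and |c| = |c'|. -/

import Mathlib

open Complex Real

/-- A single Dirac measure `μ = c δ_t`, `c ≠ 0`, is determined up to a unimodular
constant by the four magnitude measurements at two distinct points of `[-Ω,Ω]`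
when `ΩΛ < 1/2`: any `ν = c' δ_{t'}` producing the same data has `t = t'` and `|c| = |c'|`. -/
theorem stmt5 (Λ Ω : ℝ) (hΛ : 0 < Λ) (hΩ : 0 < Ω) (hΩΛ : Ω * Λ < 1 / 2)
    (c c' : ℂ) (hc : c ≠ 0) (t t' : ℝ) (ht : t ∈ Set.Icc 0 Λ) (ht' : t' ∈ Set.Icc 0 Λ)
    (v₁ v₂ : ℝ) (hv₁ : v₁ ∈ Set.Icc (-Ω) Ω) (hv₂ : v₂ ∈ Set.Icc (-Ω) Ω) (hv : v₁ ≠ v₂)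
    (f g : ℝ → ℂ)
    (hf : ∀ ω, f ω = c * Complex.exp (-2 * π * I * ω * t))
    (hg : ∀ ω, g ω = c' * Complex.exp (-2 * π * I * ω * t'))
    (m1 : ‖f v₁‖ ^ 2 = ‖g v₁‖ ^ 2)
    (m2 : ‖f v₂‖ ^ 2 = ‖g v₂‖ ^ 2)
    (m3 : ‖f v₁ - f v₂‖ ^ 2 = ‖g v₁ - g v₂‖ ^ 2)
    (m4 : ‖f v₁ - I * f v₂‖ ^ 2 = ‖g v₁ - I * g v₂‖ ^ 2) :
    t = t' ∧ ‖c‖ = ‖c'‖ := by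
  have habsf : ∀ ω : ℝ, ‖f ω‖ = ‖c‖ := by
    intro ω
    rw [hf, norm_mul, Complex.norm_exp]
    have : (-2 * π * I * ω * t).re = 0 := by simp
    rw [this, Real.exp_zero, mul_one]
  have habsg : ∀ ω : ℝ, ‖g ω‖ = ‖c'‖ := by
    intro ω
    rw [hg, norm_mul, Complex.norm_exp]
    have : (-2 * π * I * ω * t').re = 0 := by simp
    rw [this, Real.exp_zero, mul_one]
  have hcc : ‖c‖ = ‖c'‖ := by
    rw [habsf, habsg] at m1
    nlinarith [norm_nonneg c, norm_nonneg c']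
  refine ⟨?_, hcc⟩
  -- rewrite the squared moduli with normSq
  have sqA : ∀ z : ℂ, ‖z‖ ^ 2 = Complex.normSq z := fun z => Complex.sq_norm z
  rw [sqA, sqA] at m1 m2 m3 m4
  -- expand differences
  have e3 : (f v₁ * (starRingEnd ℂ) (f v₂)).re = (g v₁ * (starRingEnd ℂ) (g v₂)).re := by
    rw [Complex.normSq_sub, Complex.normSq_sub] at m3
    rw [m1, m2] at m3
    linarith
  have e4 : (f v₁ * (starRingEnd ℂ) (f v₂)).im = (g v₁ * (starRingEnd ℂ) (g v₂)).im := by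
    rw [Complex.normSq_sub, Complex.normSq_sub] at m4
    rw [Complex.normSq_mul, Complex.normSq_mul] at m4
    simp only [Complex.normSq_I, one_mul] at m4
    rw [m1, m2] at m4
    have h1 : (f v₁ * (starRingEnd ℂ) (I * f v₂)).re
        = (f v₁ * (starRingEnd ℂ) (f v₂)).im := by
      simp [Complex.mul_re, Complex.mul_im]
      ring
    have h2 : (g v₁ * (starRingEnd ℂ) (I * g v₂)).re
        = (g v₁ * (starRingEnd ℂ) (g v₂)).im := by
      simp [Complex.mul_re, Complex.mul_im]
      ring
    rw [h1, h2] at m4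
    linarith
  have key : f v₁ * (starRingEnd ℂ) (f v₂) = g v₁ * (starRingEnd ℂ) (g v₂) :=
    Complex.ext e3 e4
  -- compute the products
  have hA : f v₁ * (starRingEnd ℂ) (f v₂)
      = (Complex.normSq c : ℂ) * Complex.exp ((-2 * π * (v₁ - v₂) * t) * I) := by
    rw [hf v₁, hf v₂]
    rw [map_mul, ← Complex.exp_conj]
    have : (starRingEnd ℂ) (-2 * π * I * v₂ * t) = 2 * π * I * v₂ * t := by
      simp only [map_mul, map_neg, map_ofNat, Complex.conj_ofReal, Complex.conj_I]
      ring
    rw [this, mul_mul_mul_comm, ← Complex.exp_add, Complex.mul_conj]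
    ring_nf
  have hB : g v₁ * (starRingEnd ℂ) (g v₂)
      = (Complex.normSq c' : ℂ) * Complex.exp ((-2 * π * (v₁ - v₂) * t') * I) := by
    rw [hg v₁, hg v₂]
    rw [map_mul, ← Complex.exp_conj]
    have : (starRingEnd ℂ) (-2 * π * I * v₂ * t') = 2 * π * I * v₂ * t' := by
      simp only [map_mul, map_neg, map_ofNat, Complex.conj_ofReal, Complex.conj_I]
      ring
    rw [this, mul_mul_mul_comm, ← Complex.exp_add, Complex.mul_conj]
    ring_nf
  have hns : Complex.normSq c = Complex.normSq c' := by
    rw [← Complex.sq_norm, ← Complex.sq_norm, hcc]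
  have hns0 : (Complex.normSq c : ℂ) ≠ 0 := by
    simpa using hc
  have hexp : Complex.exp ((-2 * π * (v₁ - v₂) * t) * I)
      = Complex.exp ((-2 * π * (v₁ - v₂) * t') * I) := by
    rw [hA, hB, ← hns] at key
    exact mul_left_cancel₀ hns0 key
  rw [Complex.exp_eq_exp_iff_exists_int] at hexp
  obtain ⟨n, hn⟩ := hexp
  -- compare imaginary parts
  have him : -2 * π * (v₁ - v₂) * t = -2 * π * (v₁ - v₂) * t' + n * (2 * π) := by
    have := congrArg Complex.im hn
    simpa [Complex.mul_im, Complex.add_im] using this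
  have hπ : (0:ℝ) < π := Real.pi_pos
  have h2π : (2 * π : ℝ) ≠ 0 := by positivity
  have hkey : (v₁ - v₂) * (t' - t) = n := by
    apply mul_right_cancel₀ h2π
    linear_combination him
  -- bound
  have hb : |(v₁ - v₂) * (t' - t)| < 1 := by
    have h1 : |v₁ - v₂| ≤ 2 * Ω := by
      rw [abs_sub_le_iff]
      constructor <;> [skip; skip] <;>
        · obtain ⟨a1, a2⟩ := hv₁; obtain ⟨b1, b2⟩ := hv₂; linarith
    have h2 : |t' - t| ≤ Λ := by
      rw [abs_sub_le_iff]
      obtain ⟨a1, a2⟩ := ht; obtain ⟨b1, b2⟩ := ht'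
      constructor <;> linarith
    calc |(v₁ - v₂) * (t' - t)| = |v₁ - v₂| * |t' - t| := abs_mul _ _
      _ ≤ (2 * Ω) * Λ := by
          apply mul_le_mul h1 h2 (abs_nonneg _) (by positivity)
      _ < 1 := by linarith
  have hn0 : n = 0 := by
    by_contra h
    have : (1:ℝ) ≤ |(n:ℝ)| := by
      exact_mod_cast Int.one_le_abs (by exact_mod_cast h)
    rw [hkey] at hb
    linarith
  rw [hn0] at hkey
  have hz : (v₁ - v₂) * (t' - t) = 0 := by exact_mod_cast hkey
  rcases mul_eq_zero.mp hz with h | h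
  · exact absurd (sub_eq_zero.mp h) hv
  · linarith [sub_eq_zero.mp h]
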